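/- Let K be a complete non-archimedean nontrivially valued field which is not spherically complete, and K^∨ a spherically complete immediate extension. Let E be a 2-dimensional K-normed space with basis e₁, e₂ such that no two-element subset of E \ {0} spanning E is orthogonal (equivalently, dim_{K^∨} E^∨ = 1). Choose a sequence λₙ ∈ K with ‖e₂ − λₙe₁‖ → d_E(e₂, K e₁). If x ∈ K^∨ \ K satisfies |x − λₙ| → d(x,K), then the K-linear map E → span_K{1,x} with e₁ ↦ 1, e₂ ↦ x is an isometry onto (span_K{1,x}, t|·|) where t = ‖e₁‖. -/

import Mathlib

open Metric

/-- A metric space is spherically complete if every nonempty chain of closed balls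
has nonempty intersection. -/
def SphericallyComplete (X : Type*) [MetricSpace X] : Prop :=
  ∀ c : Set (Set X), c.Nonempty → (∀ s ∈ c, ∃ z r, s = Metric.closedBall z r) →
    IsChain (· ⊆ ·) c → (⋂₀ c).Nonempty

/-- The equivalence relation on `K^∨ \ K`: `x ~ y` iff there are `λ, μ ∈ K` with
`|y - (λx + μ)| ≤ d(y, K)`. -/
def HoleEquiv (K : Type*) {Kv : Type*} [NormedField K] [NormedField Kv] [Algebra K Kv]
    (x y : Kv) : Prop :=
  ∃ l m : K, ‖y - (algebraMap K Kv l * x + algebraMap K Kv m)‖ ≤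
    Metric.infDist y (Set.range (algebraMap K Kv))

private lemma absorb_aux {E : Type*} [SeminormedAddCommGroup E] [IsUltrametricDist E]
    {u v : E} (h : ‖u‖ < ‖v‖) : ‖u + v‖ = ‖v‖ := by
  rw [IsUltrametricDist.norm_add_eq_max_of_norm_ne_norm h.ne, max_eq_right h.le]

open Filter Topology in
theorem stmt9 {K Kv E : Type*} [NontriviallyNormedField K] [CompleteSpace K]
    [IsUltrametricDist K] [NormedField Kv] [IsUltrametricDist Kv] [Algebra K Kv]
    [NormedAddCommGroup E] [NormedSpace K E] [IsUltrametricDist E]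
    (hiso : ∀ a : K, ‖algebraMap K Kv a‖ = ‖a‖)
    (hKns : ¬ SphericallyComplete K)
    (hsph : SphericallyComplete Kv)
    (himm : ∀ z : Kv, z ≠ 0 → ∃ a : K, ‖z - algebraMap K Kv a‖ < ‖z‖)
    (e₁ e₂ : E) (hind : LinearIndependent K ![e₁, e₂])
    (hspan : Submodule.span K {e₁, e₂} = ⊤)
    (hnoorth : ∀ u v : E, u ≠ 0 → v ≠ 0 → Submodule.span K {u, v} = ⊤ →
      ¬ ∀ l m : K, ‖l • u + m • v‖ = max ‖l • u‖ ‖m • v‖)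
    (lam : ℕ → K)
    (hlam : Tendsto (fun n => ‖e₂ - lam n • e₁‖) atTop
      (𝓝 (Metric.infDist e₂ (Set.range fun c : K => c • e₁))))
    (x : Kv) (hx : x ∉ Set.range (algebraMap K Kv))
    (hxlam : Tendsto (fun n => ‖x - algebraMap K Kv (lam n)‖) atTop
      (𝓝 (Metric.infDist x (Set.range (algebraMap K Kv))))) :
    ∀ l m : K, ‖l • e₁ + m • e₂‖ =
      ‖e₁‖ * ‖algebraMap K Kv l + algebraMap K Kv m * x‖ := by
  set φ := algebraMap K Kv with hφ
  set t := ‖e₁‖ with htdef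
  set D := Metric.infDist x (Set.range φ) with hD
  set d := Metric.infDist e₂ (Set.range fun c : K => c • e₁) with hd
  have he₁ : e₁ ≠ 0 := by simpa using hind.ne_zero 0
  have ht : (0:ℝ) < t := norm_pos_iff.mpr he₁
  have hsub : ∀ a b : K, ‖φ a - φ b‖ = ‖a - b‖ := by
    intro a b; rw [← map_sub, hiso]
  have hDle : ∀ a : K, D ≤ ‖x - φ a‖ := by
    intro a
    simpa [dist_eq_norm] using
      Metric.infDist_le_dist_of_mem (Set.mem_range_self (f := φ) a)
  have hDlt : ∀ a : K, D < ‖x - φ a‖ := by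
    intro a
    rcases lt_or_eq_of_le (hDle a) with h | h
    · exact h
    · exfalso
      have hz : x - φ a ≠ 0 := sub_ne_zero.mpr fun h' => hx ⟨a, h'.symm⟩
      obtain ⟨b, hb⟩ := himm _ hz
      have heq : x - φ a - φ b = x - φ (a + b) := by rw [map_add]; ring
      rw [heq, ← h] at hb
      exact absurd (hDle (a + b)) (not_le.mpr hb)
  have hdle : ∀ a : K, d ≤ ‖e₂ - a • e₁‖ := by
    intro a
    simpa [dist_eq_norm] using
      Metric.infDist_le_dist_of_mem (Set.mem_range_self (f := fun c : K => c • e₁) a)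
  -- d ≤ t * D, else the distance would be attained, giving an orthogonal basis
  have hdtD : d ≤ t * D := by
    by_contra hcon
    push_neg at hcon
    have hev : ∀ᶠ n in atTop, t * ‖x - φ (lam n)‖ < d :=
      (hxlam.const_mul t).eventually_lt_const hcon
    obtain ⟨N, hN⟩ := eventually_atTop.mp hev
    have hconst : ∀ n ≥ N, ‖e₂ - lam n • e₁‖ = ‖e₂ - lam N • e₁‖ := by
      intro n hn
      have h2 : ‖lam N - lam n‖ ≤ max ‖x - φ (lam N)‖ ‖x - φ (lam n)‖ := by
        rw [← hsub]
        calc ‖φ (lam N) - φ (lam n)‖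
            = ‖(φ (lam N) - x) + (x - φ (lam n))‖ := by rw [sub_add_sub_cancel]
          _ ≤ max ‖φ (lam N) - x‖ ‖x - φ (lam n)‖ := IsUltrametricDist.norm_add_le_max _ _
          _ = max ‖x - φ (lam N)‖ ‖x - φ (lam n)‖ := by rw [norm_sub_rev]
      have h1 : ‖(lam N - lam n) • e₁‖ < d := by
        rw [norm_smul, ← lt_div_iff₀ ht]
        refine lt_of_le_of_lt h2 (max_lt ?_ ?_)
        · exact (lt_div_iff₀ ht).mpr (by rw [mul_comm]; exact hN N le_rfl)
        · exact (lt_div_iff₀ ht).mpr (by rw [mul_comm]; exact hN n hn)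
      have heq : e₂ - lam n • e₁ = (lam N - lam n) • e₁ + (e₂ - lam N • e₁) := by module
      rw [heq, absorb_aux (lt_of_lt_of_le h1 (hdle (lam N)))]
    have hlim2 : Tendsto (fun n => ‖e₂ - lam n • e₁‖) atTop (𝓝 ‖e₂ - lam N • e₁‖) :=
      tendsto_const_nhds.congr'
        (by filter_upwards [eventually_ge_atTop N] with n hn using (hconst n hn).symm)
    have hdeq : d = ‖e₂ - lam N • e₁‖ := tendsto_nhds_unique hlam hlim2
    set f := e₂ - lam N • e₁ with hfdef
    have hf : f ≠ 0 := by
      intro h0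
      have h0' : e₂ = lam N • e₁ := by rwa [hfdef, sub_eq_zero] at h0
      have h1 : ∑ i, (![-(lam N), 1] : Fin 2 → K) i • ![e₁, e₂] i = 0 := by
        simp [Fin.sum_univ_two, h0']
      have := Fintype.linearIndependent_iff.mp hind _ h1 1
      simp at this
    have hspan' : Submodule.span K {e₁, f} = ⊤ := by
      rw [eq_top_iff, ← hspan, Submodule.span_le, Set.insert_subset_iff,
        Set.singleton_subset_iff]
      refine ⟨Submodule.subset_span (Set.mem_insert _ _), ?_⟩
      have heq : e₂ = f + lam N • e₁ := by rw [hfdef]; module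
      rw [heq]
      exact Submodule.add_mem _
        (Submodule.subset_span (by simp))
        (Submodule.smul_mem _ _ (Submodule.subset_span (Set.mem_insert _ _)))
    refine hnoorth e₁ f he₁ hf hspan' ?_
    intro l' m'
    have hfnorm : ‖f‖ = d := hdeq.symm
    have hfd : ∀ c : K, d ≤ ‖c • e₁ + f‖ := by
      intro c
      have heq : c • e₁ + f = e₂ - (lam N - c) • e₁ := by rw [hfdef]; module
      rw [heq]; exact hdle _
    rcases eq_or_ne m' 0 with rfl | hm'
    · simp
    · have key : ‖(l'/m') • e₁ + f‖ = max ‖(l'/m') • e₁‖ ‖f‖ := by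
        rcases lt_or_ge ‖f‖ ‖(l'/m') • e₁‖ with h | h
        · rw [add_comm, absorb_aux h, max_eq_left h.le]
        · rw [max_eq_right h]
          refine le_antisymm ((IsUltrametricDist.norm_add_le_max _ _).trans (by rw [max_eq_right h])) ?_
          rw [hfnorm]; exact hfd _
      have hc : m' * (l'/m') = l' := by rw [mul_comm]; exact div_mul_cancel₀ _ hm'
      have hrw : l' • e₁ + m' • f = m' • ((l'/m') • e₁ + f) := by
        rw [smul_add, smul_smul, hc]
      rw [hrw, norm_smul, key, mul_max_of_nonneg _ _ (norm_nonneg m'),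
        ← norm_smul, smul_smul, hc, ← norm_smul]
  -- the key pointwise identity
  have key : ∀ a : K, ‖e₂ - a • e₁‖ = t * ‖x - φ a‖ := by
    intro a
    have hda : d < t * ‖x - φ a‖ := hdtD.trans_lt ((mul_lt_mul_iff_right₀ ht).mpr (hDlt a))
    obtain ⟨n, hn1, hn2⟩ :
        ∃ n, ‖x - φ (lam n)‖ < ‖x - φ a‖ ∧ ‖e₂ - lam n • e₁‖ < t * ‖x - φ a‖ :=
      ((hxlam.eventually_lt_const (hDlt a)).and (hlam.eventually_lt_const hda)).exists
    have hna : ‖lam n - a‖ = ‖x - φ a‖ := by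
      rw [← hsub]
      have heq : φ (lam n) - φ a = (φ (lam n) - x) + (x - φ a) := (sub_add_sub_cancel _ _ _).symm
      rw [heq, absorb_aux (by rw [norm_sub_rev]; exact hn1)]
    have hsm : ‖(lam n - a) • e₁‖ = t * ‖x - φ a‖ := by
      rw [norm_smul, hna, mul_comm]
    have heq : e₂ - a • e₁ = (e₂ - lam n • e₁) + (lam n - a) • e₁ := by module
    rw [heq, absorb_aux (by rw [hsm]; exact hn2), hsm]
  intro l m
  rcases eq_or_ne m 0 with rfl | hm
  · simp [norm_smul, hiso, mul_comm, htdef]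
  · have ha : l • e₁ + m • e₂ = m • (e₂ - (-(l/m)) • e₁) := by
      rw [smul_sub, smul_smul]
      have hc : m * -(l/m) = -l := by rw [mul_neg, mul_comm, div_mul_cancel₀ _ hm]
      rw [hc]; module
    have hmul : φ m * (x - φ (-(l/m))) = φ l + φ m * x := by
      rw [map_neg, sub_neg_eq_add, mul_add, ← map_mul]
      have hc : m * (l/m) = l := by rw [mul_comm]; exact div_mul_cancel₀ _ hm
      rw [hc]; ring
    rw [ha, norm_smul, key (-(l/m)), ← hiso m, mul_left_comm, ← norm_mul, hmul]
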